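/- Let R be a commutative Noetherian ℕ-graded ring and M a ℤ-graded R-module (so R = ⊕_{i≥0} R_i, M = ⊕_{j∈ℤ} M_j, and R_i·M_j ⊆ M_{i+j}). For every integer r and every prime ideal p of R_0 that is an associated prime of the R_0-module M_r, there exists a homogeneous prime ideal P of R with P ∈ Ass_R M and P ∩ R_0 = p. Consequently, if the set of associated primes of M over R_0 is infinite, then the set Ass_R M is infinite. -/

import Mathlib

set_option synthInstance.maxHeartbeats 1000000
set_option maxHeartbeats 1000000

open DirectSum

section Aux

variable {R₀ R M : Type} [CommRing R₀] [CommRing R] [Algebra R₀ R]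
    [AddCommGroup M] [Module R M] [Module R₀ M] [IsScalarTower R₀ R M]
    (𝒜 : ℕ → Submodule R₀ R) [GradedAlgebra 𝒜]
    (ℳ : ℤ → Submodule R₀ M) [DirectSum.Decomposition ℳ]

/-- The annihilator of a homogeneous element is homogeneous: each graded component of an
annihilating element also annihilates. -/
lemma aux_comp_smul_eq_zero
    (hsmul : ∀ (i : ℕ) (j : ℤ) (a : R) (x : M), a ∈ 𝒜 i → x ∈ ℳ j → a • x ∈ ℳ (i + j))
    {d : ℤ} {y : M} (hy : y ∈ ℳ d) {a : R} (ha : a • y = 0) (i₀ : ℕ) :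
    (DirectSum.decompose 𝒜 a i₀ : R) • y = 0 := by
  classical
  by_cases hi₀ : i₀ ∈ DFinsupp.support (DirectSum.decompose 𝒜 a)
  · have h1 : (∑ i ∈ (DirectSum.decompose 𝒜 a).support,
        ((DirectSum.decompose 𝒜 a i : R) • y)) = 0 := by
      rw [← Finset.sum_smul, DirectSum.sum_support_decompose 𝒜 a, ha]
    have h2 : (∑ i ∈ (DirectSum.decompose 𝒜 a).support,
        DirectSum.decompose ℳ ((DirectSum.decompose 𝒜 a i : R) • y)) = 0 := by
      rw [← DirectSum.decompose_sum, h1, DirectSum.decompose_zero]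
    have h3 : (∑ i ∈ (DirectSum.decompose 𝒜 a).support,
        DirectSum.of (fun j : ℤ => ℳ j) ((i : ℤ) + d)
          ⟨(DirectSum.decompose 𝒜 a i : R) • y,
            hsmul i d _ y (SetLike.coe_mem _) hy⟩) = 0 := by
      rw [← h2]
      refine Finset.sum_congr rfl fun i _ => ?_
      exact (DirectSum.decompose_of_mem ℳ (hsmul i d _ y (SetLike.coe_mem _) hy)).symm
    have h4 := congrFun (congrArg (DFunLike.coe (F := ⨁ j : ℤ, ℳ j)) h3) ((i₀ : ℤ) + d)
    rw [DFinsupp.finset_sum_apply] at h4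
    simp only [DFinsupp.coe_zero, Pi.zero_apply] at h4
    rw [Finset.sum_eq_single_of_mem i₀ hi₀ (fun i _ hne => by
      refine DirectSum.of_eq_of_ne _ _ _ (fun h => hne ?_)
      have := add_right_cancel h
      exact_mod_cast this.symm)] at h4
    have h5 : ((DirectSum.of (fun j : ℤ => ℳ j) ((i₀ : ℤ) + d)
        ⟨(DirectSum.decompose 𝒜 a i₀ : R) • y,
          hsmul i₀ d _ y (SetLike.coe_mem _) hy⟩) ((i₀ : ℤ) + d) : M) = 0 := by
      rw [h4]; rfl
    rwa [DirectSum.of_eq_same] at h5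
  · rw [DFinsupp.notMem_support_iff.mp hi₀]
    simp

/-- Key lemma: a prime of `R₀` which is the annihilator of a homogeneous element of `M` lifts to
a homogeneous associated prime of `M` over `R`. -/
lemma aux_key [IsNoetherianRing R]
    (hsmul : ∀ (i : ℕ) (j : ℤ) (a : R) (x : M), a ∈ 𝒜 i → x ∈ ℳ j → a • x ∈ ℳ (i + j))
    (p : Ideal R₀) (hp : p.IsPrime) (d : ℤ) (x : M) (hx : x ∈ ℳ d)
    (hpx : p = (Submodule.span R₀ {x}).annihilator) :
    ∃ P ∈ associatedPrimes R M, P.IsHomogeneous 𝒜 ∧ P.comap (algebraMap R₀ R) = p := by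
  classical
  set S : Set (Ideal R) := {I | ∃ (e : ℤ) (z : M), z ∈ ℳ e ∧
      (Submodule.span R₀ {z}).annihilator = p ∧ I = (Submodule.span R {z}).annihilator} with hS
  have hSne : S.Nonempty := ⟨_, d, x, hx, hpx.symm, rfl⟩
  obtain ⟨P, hPS, hPmax⟩ :=
    (set_has_maximal_iff_noetherian.mpr (inferInstance : IsNoetherian R R)) S hSne
  obtain ⟨e, y, hy, hann0, rfl⟩ := hPS
  -- abbreviations
  have hmemR : ∀ (b : R) (z : M), b ∈ (Submodule.span R {z}).annihilator ↔ b • z = 0 :=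
    fun b z => Submodule.mem_annihilator_span_singleton z b
  have hmem0 : ∀ (s : R₀) (z : M), s ∈ (Submodule.span R₀ {z}).annihilator ↔ s • z = 0 :=
    fun s z => Submodule.mem_annihilator_span_singleton z s
  have hyann : ∀ s : R₀, s • y = 0 ↔ s ∈ p := by
    intro s; rw [← hann0, hmem0]
  have hcomm : ∀ (s : R₀) (b : R) (z : M), s • (b • z) = b • (s • z) := by
    intro s b z
    rw [← algebraMap_smul R s z, ← algebraMap_smul R s (b • z), ← mul_smul, ← mul_smul,
      mul_comm]
  -- maximality helper
  have hmax : ∀ (e' : ℤ) (z : M), z ∈ ℳ e' → (Submodule.span R₀ {z}).annihilator = p →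
      (Submodule.span R {y}).annihilator ≤ (Submodule.span R {z}).annihilator →
      (Submodule.span R {z}).annihilator = (Submodule.span R {y}).annihilator := by
    intro e' z hz hz0 hle
    by_contra hne
    exact hPmax _ ⟨e', z, hz, hz0, rfl⟩ (lt_of_le_of_ne hle (Ne.symm hne))
  -- Step A : for s ∉ p, ann_R (s • y) = ann_R y
  have hstepA : ∀ s : R₀, s ∉ p →
      (Submodule.span R {s • y}).annihilator = (Submodule.span R {y}).annihilator := by
    intro s hs
    refine hmax e (s • y) (Submodule.smul_mem _ s hy) ?_ ?_
    · ext t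
      rw [hmem0, ← mul_smul, hyann]
      constructor
      · intro h
        rcases hp.mem_or_mem h with h' | h'
        · exact h'
        · exact absurd h' hs
      · intro h; exact p.mul_mem_right s h
    · intro b hb
      rw [hmemR] at hb ⊢
      rw [← hcomm, hb, smul_zero]
  -- P is not top
  have hPne : (Submodule.span R {y}).annihilator ≠ ⊤ := by
    intro h
    have h1 : (1 : R) • y = 0 := (hmemR 1 y).mp (h ▸ Submodule.mem_top)
    rw [one_smul] at h1
    have : (1 : R₀) ∈ p := by rw [← hyann]; rw [h1, smul_zero]
    exact hp.ne_top (Ideal.eq_top_of_isUnit_mem _ this isUnit_one)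
  -- P is homogeneous
  have hPhom : ((Submodule.span R {y}).annihilator).IsHomogeneous 𝒜 := by
    intro i a ha
    rw [hmemR] at ha ⊢
    exact aux_comp_smul_eq_zero 𝒜 ℳ hsmul hy ha i
  -- P is prime
  have hPprime : ((Submodule.span R {y}).annihilator).IsPrime := by
    refine hPhom.isPrime_of_homogeneous_mem_or_mem hPne ?_
    intro b c hb hc hbc
    by_contra hcon
    push_neg at hcon
    obtain ⟨hbP, hcP⟩ := hcon
    obtain ⟨i, hbi⟩ := hb
    by_cases hcase : ∀ s : R₀, s ∉ p → s • (b • y) ≠ 0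
    · -- ann_R₀ (b • y) = p and ann_R y ≤ ann_R (b • y)
      have h₁ : (Submodule.span R₀ {b • y}).annihilator = p := by
        ext t
        rw [hmem0]
        constructor
        · intro h
          by_contra ht
          exact hcase t ht h
        · intro h
          rw [hcomm, (hyann t).mpr h, smul_zero]
      have h₂ : (Submodule.span R {y}).annihilator ≤ (Submodule.span R {b • y}).annihilator := by
        intro a ha
        rw [hmemR] at ha ⊢
        rw [← mul_smul, mul_comm, mul_smul, ha, smul_zero]
      have h₃ := hmax _ (b • y) (hsmul i e b y hbi hy) h₁ h₂
      have : c ∈ (Submodule.span R {b • y}).annihilator := by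
        rw [hmemR, ← mul_smul, mul_comm, ← hmemR]
        exact hbc
      rw [h₃] at this
      exact hcP this
    · push_neg at hcase
      obtain ⟨s, hs, hsby⟩ := hcase
      have : b ∈ (Submodule.span R {s • y}).annihilator := by
        rw [hmemR, ← hcomm, hsby]
      rw [hstepA s hs] at this
      exact hbP this
  refine ⟨(Submodule.span R {y}).annihilator, (isAssociatedPrime_iff).mpr ⟨hPprime, y, by
    ext b; rw [hmemR, Submodule.mem_colon_singleton, Submodule.mem_bot]⟩, hPhom, ?_⟩
  ext s
  rw [Ideal.mem_comap, hmemR, algebraMap_smul, hyann]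

/-- Passing from the radical of an annihilator to an annihilator, when the ring acts through a
Noetherian quotient. -/
lemma aux_conv {A N : Type} [CommRing A] [AddCommGroup N] [Module A N] (K : Ideal A)
    [IsNoetherianRing (A ⧸ K)] (hK : ∀ k ∈ K, ∀ x : N, k • x = 0) (p : Ideal A)
    (hp : p.IsPrime) (x : N) (hpx : p = ((⊥ : Submodule A N).colon {x}).radical) :
    ∃ x' : N, p = (⊥ : Submodule A N).colon {x'} := by
  have hT : Module.IsTorsionBySet A N K := fun n k => hK k.1 k.2 n
  letI : Module (A ⧸ K) N := hT.module
  have hmk : ∀ (a : A) (n : N), (Ideal.Quotient.mk K a) • n = a • n :=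
    fun a n => Module.IsTorsionBySet.mk_smul hT a n
  have hKp : K ≤ p := fun k hk => hpx ▸ Ideal.le_radical
    (by rw [Submodule.mem_colon_singleton, Submodule.mem_bot]; exact hK k hk x)
  have hprime' : (p.map (Ideal.Quotient.mk K)).IsPrime :=
    Ideal.map_isPrime_of_surjective Ideal.Quotient.mk_surjective (by rwa [Ideal.mk_ker])
  have hmem : ∀ a, Ideal.Quotient.mk K a ∈ p.map (Ideal.Quotient.mk K) ↔ a ∈ p :=
    fun a => Ideal.mem_quotient_iff_mem hKp
  have hass : IsAssociatedPrime (p.map (Ideal.Quotient.mk K)) N := by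
    refine ⟨hprime', x, ?_⟩
    ext q
    obtain ⟨a, rfl⟩ := Ideal.Quotient.mk_surjective q
    rw [hmem, hpx, Ideal.mem_radical_iff, Ideal.mem_radical_iff]
    simp only [Submodule.mem_colon_singleton, Submodule.mem_bot, ← map_pow, hmk]
  obtain ⟨_, x', hx'⟩ := (isAssociatedPrime_iff).mp hass
  refine ⟨x', ?_⟩
  ext a
  rw [← hmem, hx', Submodule.mem_colon_singleton, Submodule.mem_colon_singleton,
    Submodule.mem_bot, Submodule.mem_bot, hmk]

end Aux

/-- Let `R` be a Noetherian ℕ-graded ring with degree-zero piece `R₀` and `M` a ℤ-graded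
`R`-module. For every `r : ℤ` and every associated prime `p` of the `R₀`-module `M_r`, there is a
homogeneous associated prime `P` of the `R`-module `M` with `P ∩ R₀ = p`. Consequently, if `M`
has infinitely many associated primes over `R₀`, then it has infinitely many associated primes
over `R`. -/
theorem stmt_3 {R₀ R M : Type} [CommRing R₀] [CommRing R] [IsNoetherianRing R] [Algebra R₀ R]
    [AddCommGroup M] [Module R M] [Module R₀ M] [IsScalarTower R₀ R M]
    (𝒜 : ℕ → Submodule R₀ R) [GradedAlgebra 𝒜]
    (h𝒜₀ : 𝒜 0 = Subalgebra.toSubmodule (⊥ : Subalgebra R₀ R))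
    (ℳ : ℤ → Submodule R₀ M) [DirectSum.Decomposition ℳ]
    (hsmul : ∀ (i : ℕ) (j : ℤ) (a : R) (x : M), a ∈ 𝒜 i → x ∈ ℳ j → a • x ∈ ℳ (i + j)) :
    (∀ (r : ℤ) (p : Ideal R₀), p ∈ associatedPrimes R₀ (ℳ r) →
      ∃ P ∈ associatedPrimes R M, P.IsHomogeneous 𝒜 ∧ P.comap (algebraMap R₀ R) = p) ∧
    ((associatedPrimes R₀ M).Infinite → (associatedPrimes R M).Infinite) := by
  classical
  have hrange : (algebraMap R₀ R).range = (GradedRing.projZeroRingHom 𝒜).range := by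
    ext z
    constructor
    · rintro ⟨s, rfl⟩
      refine ⟨algebraMap R₀ R s, ?_⟩
      have hz : algebraMap R₀ R s ∈ 𝒜 0 := by
        rw [h𝒜₀, Subalgebra.mem_toSubmodule]; exact Subalgebra.algebraMap_mem _ s
      show (DirectSum.decompose 𝒜 (algebraMap R₀ R s) 0 : R) = algebraMap R₀ R s
      rw [DirectSum.decompose_of_mem_same 𝒜 hz]
    · rintro ⟨w, rfl⟩
      have key : ∀ u : R, u ∈ 𝒜 0 → u ∈ (algebraMap R₀ R).range := by
        intro u hu
        rw [h𝒜₀, Subalgebra.mem_toSubmodule, Algebra.mem_bot] at hu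
        obtain ⟨s, hs⟩ := hu
        exact ⟨s, hs⟩
      exact key _ (SetLike.coe_mem (DirectSum.decompose 𝒜 w 0))
  haveI : IsNoetherianRing (R₀ ⧸ RingHom.ker (algebraMap R₀ R)) :=
    isNoetherianRing_of_ringEquiv _
      ((RingHom.quotientKerEquivRange _).trans (RingEquiv.subringCongr hrange)).symm
  have hkerM : ∀ k ∈ RingHom.ker (algebraMap R₀ R), ∀ z : M, k • z = 0 := by
    intro k hk z
    rw [← algebraMap_smul R k z, RingHom.mem_ker.mp hk, zero_smul]
  constructor
  · intro r p hp
    obtain ⟨hprime, x0, hx0⟩ := hp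
    obtain ⟨x, hx⟩ := aux_conv (RingHom.ker (algebraMap R₀ R))
      (fun k hk z => Subtype.ext (hkerM k hk (z : M))) p hprime x0 hx0
    have hx' : p = (Submodule.span R₀ {(x : M)}).annihilator := by
      rw [hx]
      ext t
      rw [Submodule.mem_colon_singleton, Submodule.mem_bot, Submodule.mem_annihilator_span_singleton,
        ← Submodule.coe_smul, ZeroMemClass.coe_eq_zero]
    exact aux_key 𝒜 ℳ hsmul p hprime r (x : M) x.2 hx'
  · intro hinf
    have hsub : associatedPrimes R₀ M ⊆
        (fun P => P.comap (algebraMap R₀ R)) '' (associatedPrimes R M) := by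
      intro p hp
      obtain ⟨hprime, m0, hm0⟩ := hp
      obtain ⟨m, hm⟩ := aux_conv (RingHom.ker (algebraMap R₀ R)) hkerM p hprime m0 hm0
      replace hm : p = (Submodule.span R₀ {m}).annihilator := by
        rw [hm]; ext t
        rw [Submodule.mem_colon_singleton, Submodule.mem_bot, Submodule.mem_annihilator_span_singleton]
      -- find a homogeneous component of m whose annihilator is exactly p
      set c := DirectSum.decompose ℳ m with hc
      have hmsum : (∑ j ∈ c.support, ((c j : M))) = m := DirectSum.sum_support_decompose ℳ m
      have hle : ∀ j : ℤ, p ≤ (Submodule.span R₀ {(c j : M)}).annihilator := by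
        intro j t ht
        have htm : t • m = 0 := by
          rw [hm] at ht
          exact (Submodule.mem_annihilator_span_singleton m t).mp ht
        rw [Submodule.mem_annihilator_span_singleton]
        have : DirectSum.decompose ℳ (t • m) = t • DirectSum.decompose ℳ m :=
          DirectSum.decompose_smul ℳ t m
        rw [htm, DirectSum.decompose_zero] at this
        have h0 : (t • DirectSum.decompose ℳ m) j = 0 := by
          rw [← this]
          simp
        rw [DFinsupp.smul_apply] at h0
        have h1 := congrArg (fun v : ℳ j => (v : M)) h0
        simpa [hc] using h1
      have hprod : (∏ j ∈ c.support, (Submodule.span R₀ {(c j : M)}).annihilator) ≤ p := by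
        intro t ht
        rw [hm, Submodule.mem_annihilator_span_singleton, ← hmsum, Finset.smul_sum]
        refine Finset.sum_eq_zero fun j hj => ?_
        have htj : t ∈ (Submodule.span R₀ {(c j : M)}).annihilator :=
          (Ideal.prod_le_inf.trans (Finset.inf_le hj)) ht
        exact (Submodule.mem_annihilator_span_singleton _ t).mp htj
      obtain ⟨j, _, hjle⟩ := (hprime.prod_le).mp hprod
      have hpeq : p = (Submodule.span R₀ {(c j : M)}).annihilator :=
        le_antisymm (hle j) hjle
      obtain ⟨P, hP, _, hcomap⟩ :=
        aux_key 𝒜 ℳ hsmul p hprime j (c j : M) (SetLike.coe_mem _) hpeq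
      exact ⟨P, hP, hcomap⟩
    exact Set.Infinite.of_image _ (hinf.mono hsub)
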